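/- (Serrin's comparison principle.) Let Ω ⊂ ℝⁿ be a bounded domain and let L be the second-order elliptic operator Lu = Σ_{i,j=1}^{n} a_{ij}(x) ∂²u/∂x_i∂x_j + Σ_{i=1}^{n} b_i(x) ∂u/∂x_i + c(x) u, where a_{ij} = a_{ji} are continuous on the closure of Ω, b_i, c ∈ L^∞(Ω), and L is uniformly elliptic: there is λ > 0 with Σ_{i,j} a_{ij}(x) ξ_i ξ_j ≥ λ|ξ|² for all x ∈ Ω and ξ ∈ ℝⁿ. If u ∈ C²(Ω) ∩ C(closure of Ω) satisfies Lu ≥ 0 in Ω and u ≤ 0 in Ω, then either u < 0 everywhere in Ω or u ≡ 0 in Ω. -/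

import Mathlib

open MeasureTheory Set Metric

set_option maxHeartbeats 3000000

local notation "E" n => EuclideanSpace ℝ (Fin n)

noncomputable def pd {m : ℕ} (u : EuclideanSpace ℝ (Fin m) → ℝ) (i : Fin m)
    (x : EuclideanSpace ℝ (Fin m)) : ℝ :=
  fderiv ℝ u x (EuclideanSpace.single i 1)



lemma sum_smul_single {n : ℕ} (ξ : E n) :
    ∑ i, ξ i • EuclideanSpace.single i (1:ℝ) = ξ := by
  ext j
  have : (∑ i, ξ i • EuclideanSpace.single i (1:ℝ)) j
      = ∑ i, (ξ i • EuclideanSpace.single i (1:ℝ)) j := by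
    rw [WithLp.ofLp_sum]; exact Finset.sum_apply j Finset.univ _
  rw [this]
  simp [EuclideanSpace.single_apply]

lemma bilin_expand {n : ℕ} (B : (E n) →L[ℝ] (E n) →L[ℝ] ℝ) (ξ : E n) :
    B ξ ξ = ∑ i, ∑ j, ξ i * ξ j *
      B (EuclideanSpace.single i 1) (EuclideanSpace.single j 1) := by
  have h2 : ∀ L : (E n) →L[ℝ] ℝ, L ξ = ∑ j, ξ j * L (EuclideanSpace.single j 1) := by
    intro L
    conv_lhs => rw [← sum_smul_single ξ]
    rw [map_sum]; simp
  have h1 : B ξ = ∑ i, ξ i • B (EuclideanSpace.single i 1) := by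
    conv_lhs => rw [← sum_smul_single ξ]
    rw [map_sum]; simp
  calc B ξ ξ = ∑ j, ξ j * (B ξ) (EuclideanSpace.single j 1) := h2 _
    _ = ∑ j, ∑ i, ξ j * (ξ i * B (EuclideanSpace.single i 1) (EuclideanSpace.single j 1)) := by
        refine Finset.sum_congr rfl fun j _ => ?_
        rw [h1, ContinuousLinearMap.sum_apply, Finset.mul_sum]
        refine Finset.sum_congr rfl fun i _ => ?_
        simp
    _ = ∑ i, ∑ j, ξ i * ξ j *
      B (EuclideanSpace.single i 1) (EuclideanSpace.single j 1) := by
        rw [Finset.sum_comm]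
        exact Finset.sum_congr rfl fun i _ => Finset.sum_congr rfl fun j _ => by ring

lemma trace_nonpos {n : ℕ} (A H : Matrix (Fin n) (Fin n) ℝ)
    (hA : A.PosSemidef)
    (hH : ∀ ξ : Fin n → ℝ, ∑ k, ∑ l, ξ k * H k l * ξ l ≤ 0) :
    ∑ i, ∑ j, A i j * H j i ≤ 0 := by
  have h1 : ∑ i, ∑ j, A i j * H j i = (A * H).trace := by
    simp only [Matrix.trace, Matrix.diag, Matrix.mul_apply]
  obtain ⟨m, v, hv⟩ := Matrix.posSemidef_iff_eq_sum_vecMulVec.mp hA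
  have hA' : ∀ i j, A i j = ∑ k, v k i * v k j := by
    intro i j; rw [hv]; simp [Matrix.sum_apply, Matrix.vecMulVec_apply]
  have h2 : ∑ i, ∑ j, A i j * H j i = ∑ k, ∑ j, ∑ i, v k j * H j i * v k i := by
    simp_rw [hA', Finset.sum_mul]
    rw [Finset.sum_congr rfl fun i _ => Finset.sum_comm, Finset.sum_comm]
    refine Finset.sum_congr rfl fun k _ => ?_
    rw [Finset.sum_comm]
    exact Finset.sum_congr rfl fun j _ => Finset.sum_congr rfl fun i _ => by ring
  rw [h2]
  exact Finset.sum_nonpos fun k _ => hH (v k)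

lemma onedim {g g' : ℝ → ℝ} {m : ℝ}
    (hg : ∀ᶠ t in nhds (0:ℝ), HasDerivAt g (g' t) t)
    (hmax : IsLocalMax g 0) (hm : HasDerivAt g' m 0) : m ≤ 0 := by
  by_contra hc
  push_neg at hc
  have hg0 : g' 0 = 0 := by
    rw [← (hg.self_of_nhds).deriv]; exact hmax.deriv_eq_zero
  have hslope : Filter.Tendsto (fun t => g' t / t) (nhdsWithin 0 {(0:ℝ)}ᶜ) (nhds m) := by
    have h := hasDerivAt_iff_tendsto_slope.1 hm
    have : slope g' 0 = fun t => g' t / t := by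
      funext t; rw [slope_def_field]; rw [hg0]; ring_nf
    rwa [this] at h
  have hpos : ∀ᶠ t in nhdsWithin 0 {(0:ℝ)}ᶜ, 0 < g' t / t :=
    hslope.eventually (eventually_gt_nhds hc)
  have hpos' : ∀ᶠ t in nhds (0:ℝ), t ∈ ({(0:ℝ)}ᶜ : Set ℝ) → 0 < g' t / t :=
    eventually_nhdsWithin_iff.1 hpos
  have hall := (hg.and (hmax.and hpos'))
  rw [Metric.eventually_nhds_iff] at hall
  obtain ⟨δ, hδ, hP⟩ := hall
  have ht0 : 0 < δ/2 := by linarith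
  have hmem : ∀ t ∈ Icc (0:ℝ) (δ/2), dist t 0 < δ := by
    intro t ht
    rw [Real.dist_eq, sub_zero]
    rw [abs_of_nonneg ht.1]
    linarith [ht.2]
  have hsm : StrictMonoOn g (Icc 0 (δ/2)) := by
    apply strictMonoOn_of_deriv_pos (convex_Icc 0 (δ/2))
    · intro t ht
      exact ((hP (hmem t ht)).1.continuousAt).continuousWithinAt
    · intro t ht
      rw [interior_Icc] at ht
      have hd := hP (hmem t ⟨le_of_lt ht.1, le_of_lt ht.2⟩)
      rw [hd.1.deriv]
      have h2 := hd.2.2 (by simpa using ne_of_gt ht.1)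
      have : 0 < (g' t / t) * t := mul_pos h2 ht.1
      rwa [div_mul_cancel₀] at this
      exact ne_of_gt ht.1
  have h1 : g 0 < g (δ/2) :=
    hsm (left_mem_Icc.2 (le_of_lt ht0)) (right_mem_Icc.2 (le_of_lt ht0)) ht0
  have h2 : g (δ/2) ≤ g 0 := (hP (hmem _ (right_mem_Icc.2 (le_of_lt ht0)))).2.1
  linarith

lemma hessian_nonpos {n : ℕ} {V : Set (E n)} (hV : IsOpen V)
    {f : (E n) → ℝ} (hf : ContDiffOn ℝ 2 f V)
    {p : E n} (hp : p ∈ V) (hmax : IsLocalMax f p)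
    (ξ : E n) :
    fderiv ℝ (fderiv ℝ f) p ξ ξ ≤ 0 := by
  have hf' : ContDiffOn ℝ 1 (fderiv ℝ f) V := hf.fderiv_of_isOpen hV (by norm_num)
  have hdf : ∀ x ∈ V, HasFDerivAt f (fderiv ℝ f x) x := fun x hx =>
    ((hf.differentiableOn (by norm_num)).differentiableAt (hV.mem_nhds hx)).hasFDerivAt
  have hdf' : HasFDerivAt (fderiv ℝ f) (fderiv ℝ (fderiv ℝ f) p) p :=
    ((hf'.differentiableOn (by norm_num)).differentiableAt (hV.mem_nhds hp)).hasFDerivAt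
  set ℓ : ℝ → (E n) := fun t => p + t • ξ with hℓ
  have hℓd : ∀ t : ℝ, HasDerivAt ℓ ξ t := by
    intro t
    have h1 : HasDerivAt (fun t : ℝ => t • ξ) ((1:ℝ) • ξ) t := (hasDerivAt_id t).smul_const ξ
    rw [one_smul] at h1
    exact h1.const_add p
  have hℓ0 : ℓ 0 = p := by simp [hℓ]
  have hℓc : Filter.Tendsto ℓ (nhds 0) (nhds p) := by
    rw [← hℓ0]; exact (hℓd 0).continuousAt
  have hev : ∀ᶠ t in nhds (0:ℝ), ℓ t ∈ V := hℓc.eventually (hV.eventually_mem hp)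
  set g : ℝ → ℝ := fun t => f (ℓ t) with hgdef
  set g' : ℝ → ℝ := fun t => fderiv ℝ f (ℓ t) ξ with hg'def
  have hg : ∀ᶠ t in nhds (0:ℝ), HasDerivAt g (g' t) t := by
    filter_upwards [hev] with t ht
    exact (hdf _ ht).comp_hasDerivAt t (hℓd t)
  have hgmax : IsLocalMax g 0 := by
    have h := hℓc.eventually hmax
    filter_upwards [h] with t ht
    simpa [hgdef, hℓ0] using ht
  have hm : HasDerivAt g' (fderiv ℝ (fderiv ℝ f) p ξ ξ) 0 := by
    have h1 : HasDerivAt (fun t => fderiv ℝ f (ℓ t)) (fderiv ℝ (fderiv ℝ f) p ξ) 0 := by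
      have h0 : HasFDerivAt (fderiv ℝ f) (fderiv ℝ (fderiv ℝ f) p) (ℓ 0) := by
        rw [hℓ0]; exact hdf'
      exact h0.comp_hasDerivAt 0 (hℓd 0)
    have h2 := ((ContinuousLinearMap.apply ℝ ℝ ξ).hasFDerivAt).comp_hasDerivAt 0 h1
    exact h2
  exact onedim hg hgmax hm

lemma pd_pd_eq {n : ℕ} {V : Set (E n)} (hV : IsOpen V)
    {f : (E n) → ℝ} (hf : ContDiffOn ℝ 2 f V)
    {x : E n} (hx : x ∈ V) (i j : Fin n) :
    pd (pd f i) j x = fderiv ℝ (fderiv ℝ f) x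
      (EuclideanSpace.single j 1) (EuclideanSpace.single i 1) := by
  have hf' : ContDiffOn ℝ 1 (fderiv ℝ f) V := hf.fderiv_of_isOpen hV (by norm_num)
  have hdf' : HasFDerivAt (fderiv ℝ f) (fderiv ℝ (fderiv ℝ f) x) x :=
    ((hf'.differentiableOn (by norm_num)).differentiableAt (hV.mem_nhds hx)).hasFDerivAt
  have h1 := ((ContinuousLinearMap.apply ℝ ℝ (EuclideanSpace.single i (1:ℝ))).hasFDerivAt
      (x := fderiv ℝ f x)).comp x hdf'
  have h2 : HasFDerivAt (pd f i)
      ((ContinuousLinearMap.apply ℝ ℝ (EuclideanSpace.single i (1:ℝ))).comp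
        (fderiv ℝ (fderiv ℝ f) x)) x := h1
  have : pd (pd f i) j x = fderiv ℝ (pd f i) x (EuclideanSpace.single j 1) := rfl
  rw [this, h2.fderiv]
  rfl

lemma weakmax {n : ℕ} {U V : Set (E n)} (hUo : IsOpen U) (hUb : Bornology.IsBounded U)
    (hVo : IsOpen V) (hUV : U ⊆ V)
    {v : (E n) → ℝ} (hv2 : ContDiffOn ℝ 2 v V) (hvc : ContinuousOn v (closure U))
    (A : (E n) → Fin n → Fin n → ℝ) (B : (E n) → Fin n → ℝ) (ct : (E n) → ℝ)
    (hA : ∀ x ∈ U, ∀ ξ : E n, 0 ≤ ∑ i, ∑ j, A x i j * ξ i * ξ j)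
    (hAs : ∀ x ∈ U, ∀ i j, A x i j = A x j i)
    (hct : ∀ x ∈ U, ct x ≤ 0)
    (hLv : ∀ x ∈ U, 0 < (∑ i, ∑ j, A x i j * pd (pd v i) j x)
        + (∑ i, B x i * pd v i x) + ct x * v x)
    (hbv : ∀ x ∈ frontier U, v x ≤ 0) :
    ∀ x ∈ closure U, v x ≤ 0 := by
  rcases U.eq_empty_or_nonempty with h | hne
  · intro x hx; rw [h] at hx; simp at hx
  obtain ⟨p, hpc, hmax⟩ := (hUb.isCompact_closure).exists_isMaxOn hne.closure hvc
  intro x hx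
  have hxp : v x ≤ v p := hmax hx
  suffices hvp : v p ≤ 0 by linarith
  by_contra hvp
  push_neg at hvp
  have hpU : p ∈ U := by
    have hnf : p ∉ frontier U := fun h => absurd (hbv p h) (not_le.2 hvp)
    have : p ∈ interior U := by
      by_contra h
      exact hnf ⟨hpc, h⟩
    rwa [hUo.interior_eq] at this
  have hlm : IsLocalMax v p :=
    hmax.isLocalMax (Filter.mem_of_superset (hUo.mem_nhds hpU) subset_closure)
  have hfd : fderiv ℝ v p = 0 := hlm.fderiv_eq_zero
  have hpd0 : ∀ i, pd v i p = 0 := fun i => by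
    have : pd v i p = fderiv ℝ v p (EuclideanSpace.single i 1) := rfl
    rw [this, hfd]; rfl
  have hpV : p ∈ V := hUV hpU
  have hhess : ∀ ξ : E n, fderiv ℝ (fderiv ℝ v) p ξ ξ ≤ 0 := hessian_nonpos hVo hv2 hpV hlm
  set Hm : Matrix (Fin n) (Fin n) ℝ :=
    Matrix.of fun k l => fderiv ℝ (fderiv ℝ v) p
      (EuclideanSpace.single k 1) (EuclideanSpace.single l 1) with hHm
  set Am : Matrix (Fin n) (Fin n) ℝ := Matrix.of fun i j => A p i j with hAm
  have hApsd : Am.PosSemidef := by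
    refine Matrix.PosSemidef.of_dotProduct_mulVec_nonneg ?_ ?_
    · ext i j
      simp only [Matrix.conjTranspose_apply, hAm, Matrix.of_apply, star_trivial]
      exact hAs p hpU j i
    · intro x
      have h := hA p hpU ((WithLp.equiv 2 (Fin n → ℝ)).symm x)
      have he : ∀ i, ((WithLp.equiv 2 (Fin n → ℝ)).symm x) i = x i := fun i => rfl
      calc (0:ℝ) ≤ ∑ i, ∑ j, A p i j * x i * x j := by simpa only [he] using h
        _ = dotProduct (star x) (Am.mulVec x) := by
            simp only [dotProduct, Matrix.mulVec, star_trivial, hAm, Matrix.of_apply,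
              Finset.mul_sum]
            exact Finset.sum_congr rfl fun i _ => Finset.sum_congr rfl fun j _ => by ring
  have hHq : ∀ ξ : Fin n → ℝ, ∑ k, ∑ l, ξ k * Hm k l * ξ l ≤ 0 := by
    intro ξ
    have h := hhess ((WithLp.equiv 2 (Fin n → ℝ)).symm ξ)
    rw [bilin_expand] at h
    have he : ∀ i, ((WithLp.equiv 2 (Fin n → ℝ)).symm ξ) i = ξ i := fun i => rfl
    calc ∑ k, ∑ l, ξ k * Hm k l * ξ l
        = ∑ i, ∑ j, ((WithLp.equiv 2 (Fin n → ℝ)).symm ξ) i * ((WithLp.equiv 2 (Fin n → ℝ)).symm ξ) j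
            * fderiv ℝ (fderiv ℝ v) p (EuclideanSpace.single i 1) (EuclideanSpace.single j 1) := by
          simp only [he, hHm, Matrix.of_apply]
          exact Finset.sum_congr rfl fun i _ => Finset.sum_congr rfl fun j _ => by ring
      _ ≤ 0 := h
  have htr := trace_nonpos Am Hm hApsd hHq
  have hsum : ∑ i, ∑ j, A p i j * pd (pd v i) j p = ∑ i, ∑ j, Am i j * Hm j i := by
    refine Finset.sum_congr rfl fun i _ => Finset.sum_congr rfl fun j _ => ?_
    rw [pd_pd_eq hVo hv2 hpV i j]
    simp [hAm, hHm]
  have hL := hLv p hpU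
  have hb0 : ∑ i, B p i * pd v i p = 0 := by
    simp [hpd0]
  have hcv : ct p * v p ≤ 0 := mul_nonpos_of_nonpos_of_nonneg (hct p hpU) (le_of_lt hvp)
  rw [hsum, hb0] at hL
  linarith

section barrier
variable {n : ℕ} (y : EuclideanSpace ℝ (Fin n)) (α r : ℝ)

noncomputable def qq (x : EuclideanSpace ℝ (Fin n)) : ℝ := ∑ k, (x k - y k)^2

noncomputable def Qd (x : EuclideanSpace ℝ (Fin n)) : (EuclideanSpace ℝ (Fin n)) →L[ℝ] ℝ :=
  ∑ k, (2*(x k - y k)) • (EuclideanSpace.proj k : (EuclideanSpace ℝ (Fin n)) →L[ℝ] ℝ)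

noncomputable def wb (x : EuclideanSpace ℝ (Fin n)) : ℝ :=
  Real.exp (-α * qq y x) - Real.exp (-α * r^2)

lemma Qd_apply (x ξ : EuclideanSpace ℝ (Fin n)) :
    Qd y x ξ = ∑ k, 2*(x k - y k) * ξ k := by
  simp [Qd, ContinuousLinearMap.sum_apply]

lemma hasFDerivAt_qq (x : EuclideanSpace ℝ (Fin n)) : HasFDerivAt (qq y) (Qd y x) x := by
  have h : ∀ k : Fin n, HasFDerivAt (fun x : EuclideanSpace ℝ (Fin n) => (x k - y k)^2)
      ((2*(x k - y k)) • (EuclideanSpace.proj k : (EuclideanSpace ℝ (Fin n)) →L[ℝ] ℝ)) x := by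
    intro k
    have h1 : HasFDerivAt (fun x : EuclideanSpace ℝ (Fin n) => x k - y k)
        (EuclideanSpace.proj k : (EuclideanSpace ℝ (Fin n)) →L[ℝ] ℝ) x :=
      ((EuclideanSpace.proj k : (EuclideanSpace ℝ (Fin n)) →L[ℝ] ℝ).hasFDerivAt).sub_const (y k)
    have h2 := h1.mul h1
    have h3 : (fun x : EuclideanSpace ℝ (Fin n) => (x k - y k)^2)
        = fun x : EuclideanSpace ℝ (Fin n) => (x k - y k) * (x k - y k) := by
      funext z; ring
    rw [h3]
    exact h2.congr_fderiv (by rw [two_mul, add_smul])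
  exact HasFDerivAt.fun_sum (fun k _ => h k)

end barrier

section barrier2
variable {n : ℕ} (y : EuclideanSpace ℝ (Fin n)) (α r : ℝ)

lemma hasFDerivAt_wb (x : EuclideanSpace ℝ (Fin n)) :
    HasFDerivAt (wb y α r) (Real.exp (-α * qq y x) • ((-α) • Qd y x)) x := by
  have h1 : HasFDerivAt (fun x => -α * qq y x) ((-α) • Qd y x) x :=
    (hasFDerivAt_qq y x).const_mul (-α)
  exact h1.exp.sub_const _

lemma pd_wb (x : EuclideanSpace ℝ (Fin n)) (i : Fin n) :
    pd (wb y α r) i x = (-2*α) * (x i - y i) * Real.exp (-α * qq y x) := by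
  have : pd (wb y α r) i x = fderiv ℝ (wb y α r) x (EuclideanSpace.single i 1) := rfl
  rw [this, (hasFDerivAt_wb y α r x).fderiv]
  rw [ContinuousLinearMap.smul_apply, ContinuousLinearMap.smul_apply, Qd_apply]
  have : ∑ k, 2*(x k - y k) * (EuclideanSpace.single i (1:ℝ)) k = 2*(x i - y i) := by
    rw [Finset.sum_eq_single i]
    · simp [EuclideanSpace.single_apply]
    · intro k _ hk; simp [EuclideanSpace.single_apply, hk]
    · intro h; exact absurd (Finset.mem_univ i) h
  rw [this]; simp; ring

lemma hasFDerivAt_pd_wb (x : EuclideanSpace ℝ (Fin n)) (i : Fin n) :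
    HasFDerivAt (pd (wb y α r) i)
      (((-2*α) * (x i - y i)) • (Real.exp (-α * qq y x) • ((-α) • Qd y x))
        + Real.exp (-α * qq y x) • ((-2*α) • (EuclideanSpace.proj i : (EuclideanSpace ℝ (Fin n)) →L[ℝ] ℝ))) x := by
  have hfun : pd (wb y α r) i
      = fun x => ((-2*α) * (x i - y i)) * Real.exp (-α * qq y x) :=
    funext fun z => pd_wb y α r z i
  rw [hfun]
  have h1 : HasFDerivAt (fun x : EuclideanSpace ℝ (Fin n) => (-2*α) * (x i - y i))
      ((-2*α) • (EuclideanSpace.proj i : (EuclideanSpace ℝ (Fin n)) →L[ℝ] ℝ)) x :=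
    (((EuclideanSpace.proj i : (EuclideanSpace ℝ (Fin n)) →L[ℝ] ℝ).hasFDerivAt).sub_const (y i)).const_mul _
  have h2 : HasFDerivAt (fun x => Real.exp (-α * qq y x))
      (Real.exp (-α * qq y x) • ((-α) • Qd y x)) x :=
    ((hasFDerivAt_qq y x).const_mul (-α)).exp
  exact h1.mul h2

lemma pd_pd_wb (x : EuclideanSpace ℝ (Fin n)) (i j : Fin n) :
    pd (pd (wb y α r) i) j x
      = Real.exp (-α * qq y x) *
          (4*α^2*(x i - y i)*(x j - y j) - (if i = j then 2*α else 0)) := by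
  have : pd (pd (wb y α r) i) j x
      = fderiv ℝ (pd (wb y α r) i) x (EuclideanSpace.single j 1) := rfl
  rw [this, (hasFDerivAt_pd_wb y α r x i).fderiv]
  simp only [ContinuousLinearMap.add_apply, ContinuousLinearMap.smul_apply, Qd_apply,
    smul_eq_mul]
  have hs : ∑ k, 2*(x k - y k) * (EuclideanSpace.single j (1:ℝ)) k = 2*(x j - y j) := by
    rw [Finset.sum_eq_single j]
    · simp [EuclideanSpace.single_apply]
    · intro k _ hk; simp [EuclideanSpace.single_apply, hk]
    · intro h; exact absurd (Finset.mem_univ j) h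
  rw [hs]
  have hp : (EuclideanSpace.proj i : (EuclideanSpace ℝ (Fin n)) →L[ℝ] ℝ)
      (EuclideanSpace.single j (1:ℝ)) = if i = j then 1 else 0 := by
    simp [EuclideanSpace.single_apply, eq_comm]
  rw [hp]
  split_ifs with h
  · simp only [smul_eq_mul]; ring
  · simp only [smul_eq_mul]; ring

lemma contDiff_wb : ContDiff ℝ 2 (wb y α r) := by
  have hq : ContDiff ℝ 2 (qq y) := by
    apply ContDiff.sum
    intro k _
    have : ContDiff ℝ 2 (fun x : EuclideanSpace ℝ (Fin n) => x k - y k) :=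
      ((EuclideanSpace.proj k : (EuclideanSpace ℝ (Fin n)) →L[ℝ] ℝ).contDiff).sub contDiff_const
    exact this.pow 2
  exact ((contDiff_const.mul hq).exp).sub contDiff_const

end barrier2

lemma norm_sq_eq_qq {n : ℕ} (y x : E n) : ‖x - y‖^2 = qq y x := by
  rw [EuclideanSpace.norm_eq, Real.sq_sqrt]
  · exact Finset.sum_congr rfl fun k _ => by
      rw [Real.norm_eq_abs, sq_abs]; rfl
  · exact Finset.sum_nonneg fun k _ => sq_nonneg _

lemma coord_abs_le {n : ℕ} (y x : E n) (i : Fin n) : |x i - y i| ≤ ‖x - y‖ := by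
  have h1 : (x i - y i)^2 ≤ qq y x := by
    refine Finset.single_le_sum (fun k _ => sq_nonneg ((x k - y k))) (Finset.mem_univ i)
  rw [← norm_sq_eq_qq] at h1
  nlinarith [sq_abs (x i - y i), abs_nonneg (x i - y i), norm_nonneg (x - y)]

lemma hopf {n : ℕ} {Ω : Set (E n)} (hΩo : IsOpen Ω)
    (a : (E n) → Fin n → Fin n → ℝ) (b : (E n) → Fin n → ℝ) (c : (E n) → ℝ)
    (hacont : ∀ i j, ContinuousOn (fun x => a x i j) (closure Ω))
    (hbbd : ∃ M : ℝ, ∀ x ∈ Ω, ∀ i, |b x i| ≤ M)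
    (hcbd : ∃ M : ℝ, ∀ x ∈ Ω, |c x| ≤ M)
    (hell : ∃ lam > (0:ℝ), ∀ x ∈ Ω, ∀ ξ : E n,
      lam * ‖ξ‖^2 ≤ ∑ i, ∑ j, a x i j * ξ i * ξ j)
    (hasym : ∀ x i j, a x i j = a x j i)
    (u : (E n) → ℝ) (hu2 : ContDiffOn ℝ 2 u Ω) (huc : ContinuousOn u (closure Ω))
    (hLu : ∀ x ∈ Ω, 0 ≤ (∑ i, ∑ j, a x i j * pd (pd u i) j x)
        + (∑ i, b x i * pd u i x) + c x * u x)
    (hneg : ∀ x ∈ Ω, u x ≤ 0)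
    {y : E n} {r : ℝ} (hr : 0 < r) (hn : 0 < n) (hball : closedBall y r ⊆ Ω)
    (hult : ∀ x ∈ ball y r, u x < 0)
    {x0 : E n} (hx0 : dist x0 y = r) (hu0 : u x0 = 0) : False := by
  -- constants
  obtain ⟨M₀, hM₀⟩ := hbbd
  set M : ℝ := max M₀ 0 with hMdef
  have hM : ∀ x ∈ Ω, ∀ i, |b x i| ≤ M := fun x hx i => (hM₀ x hx i).trans (le_max_left _ _)
  have hM0 : 0 ≤ M := le_max_right _ _
  obtain ⟨Mc₀, hMc₀⟩ := hcbd
  set Mc : ℝ := max Mc₀ 0 with hMcdef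
  have hMc : ∀ x ∈ Ω, |c x| ≤ Mc := fun x hx => (hMc₀ x hx).trans (le_max_left _ _)
  have hMc0 : 0 ≤ Mc := le_max_right _ _
  obtain ⟨lam, hlam, helli⟩ := hell
  have hcbΩ : closedBall y r ⊆ closure Ω := hball.trans subset_closure
  have hTc : ContinuousOn (fun x => ∑ i, a x i i) (closedBall y r) :=
    continuousOn_finset_sum _ fun i _ => (hacont i i).mono hcbΩ
  obtain ⟨K₀, hK₀⟩ := (isCompact_closedBall y r).exists_bound_of_continuousOn hTc
  set K : ℝ := max K₀ 0 with hKdef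
  have hK : ∀ x ∈ closedBall y r, |∑ i, a x i i| ≤ K := fun x hx => by
    have := hK₀ x hx
    rw [Real.norm_eq_abs] at this
    exact this.trans (le_max_left _ _)
  have hK0 : 0 ≤ K := le_max_right _ _
  -- choice of alpha
  set α : ℝ := max 1 ((2*K + 2*M*n*r + Mc + 1)/(lam*r^2)) with hαdef
  have hα1 : 1 ≤ α := le_max_left _ _
  have hα0 : 0 < α := lt_of_lt_of_le one_pos hα1
  have hlr : 0 < lam * r^2 := by positivity
  have hαkey : 2*K + 2*M*n*r + Mc + 1 ≤ lam * r^2 * α := by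
    have h := le_max_right 1 ((2*K + 2*M*n*r + Mc + 1)/(lam*r^2))
    rw [div_le_iff₀ hlr] at h
    linarith
  have hgood : 2*K*α + 2*M*n*r*α + Mc < lam*r^2*α^2 := by nlinarith
  -- sphere max and epsilon
  have hsph_ne : (sphere y (r/2)).Nonempty := by
    refine ⟨y + (r/2) • EuclideanSpace.single ⟨0, hn⟩ 1, ?_⟩
    rw [mem_sphere, dist_eq_norm, add_sub_cancel_left, norm_smul, EuclideanSpace.norm_single]
    simp [abs_of_pos (by linarith : (0:ℝ) < r/2)]
    linarith
  have hsph_ball : sphere y (r/2) ⊆ ball y r := fun z hz => by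
    rw [mem_sphere] at hz; rw [mem_ball, hz]; linarith
  have hsph_cl : sphere y (r/2) ⊆ closure Ω :=
    fun z hz => hcbΩ (ball_subset_closedBall (hsph_ball hz))
  obtain ⟨ps, hps, hpsmax⟩ := (isCompact_sphere y (r/2)).exists_isMaxOn hsph_ne
    (huc.mono hsph_cl)
  set ε : ℝ := -(u ps) with hεdef
  have hε : 0 < ε := by
    have := hult ps (hsph_ball hps)
    simp only [hεdef]; linarith
  have husph : ∀ x ∈ sphere y (r/2), u x ≤ -ε := fun x hx => by
    have := hpsmax hx
    simp only [hεdef]; simpa using this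
  -- the annulus
  set U : Set (E n) := ball y r \ closedBall y (r/2) with hUdef
  have hUo : IsOpen U := isOpen_ball.sdiff isClosed_closedBall
  have hUb : Bornology.IsBounded U := (isBounded_ball).subset diff_subset
  have hUΩ : U ⊆ Ω := fun x hx => hball (ball_subset_closedBall hx.1)
  have hUmem : ∀ x, x ∈ U ↔ (r/2 < dist x y ∧ dist x y < r) := by
    intro x
    simp only [hUdef, mem_diff, mem_ball, mem_closedBall, not_le]
    tauto
  have hclosU : ∀ x ∈ closure U, dist x y ≤ r ∧ r/2 ≤ dist x y := by
    intro x hx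
    constructor
    · have h1 : closure U ⊆ closedBall y r :=
        closure_minimal (fun z hz => ball_subset_closedBall hz.1) isClosed_closedBall
      exact h1 hx
    · have h2 : closure U ⊆ (ball y (r/2))ᶜ :=
        closure_minimal (fun z hz hb => hz.2 (ball_subset_closedBall hb))
          isOpen_ball.isClosed_compl
      have := h2 hx
      simpa [mem_ball, not_lt] using this
  -- the perturbed function
  set v : (E n) → ℝ := fun x => u x + ε * wb y α r x with hvdef
  have hv2 : ContDiffOn ℝ 2 v Ω :=
    hu2.add ((contDiff_const.mul (contDiff_wb y α r)).contDiffOn)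
  have hclosUΩ : closure U ⊆ closure Ω := fun x hx =>
    hcbΩ (mem_closedBall.2 (hclosU x hx).1)
  have hvc : ContinuousOn v (closure U) :=
    (huc.mono hclosUΩ).add ((contDiff_const.mul (contDiff_wb y α r)).continuous.continuousOn)
  -- linearity of pd
  have hwd : ∀ x, DifferentiableAt ℝ (wb y α r) x := fun x =>
    (hasFDerivAt_wb y α r x).differentiableAt
  have hud : ∀ x ∈ Ω, DifferentiableAt ℝ u x := fun x hx =>
    (hu2.differentiableOn (by norm_num)).differentiableAt (hΩo.mem_nhds hx)
  have hfu' : ContDiffOn ℝ 1 (fderiv ℝ u) Ω := hu2.fderiv_of_isOpen hΩo (by norm_num)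
  have hpdud : ∀ x ∈ Ω, ∀ i, DifferentiableAt ℝ (pd u i) x := by
    intro x hx i
    have hdfu : DifferentiableAt ℝ (fderiv ℝ u) x :=
      (hfu'.differentiableOn (by norm_num)).differentiableAt (hΩo.mem_nhds hx)
    have h1 := ((ContinuousLinearMap.apply ℝ ℝ (EuclideanSpace.single i (1:ℝ))).hasFDerivAt
      (x := fderiv ℝ u x)).comp x hdfu.hasFDerivAt
    have h2 : HasFDerivAt (pd u i)
        ((ContinuousLinearMap.apply ℝ ℝ (EuclideanSpace.single i (1:ℝ))).comp
          (fderiv ℝ (fderiv ℝ u) x)) x := h1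
    exact h2.differentiableAt
  have hpdv : ∀ x ∈ Ω, ∀ i, pd v i x = pd u i x + ε * pd (wb y α r) i x := by
    intro x hx i
    have h1 : pd v i x = fderiv ℝ v x (EuclideanSpace.single i 1) := rfl
    rw [h1, hvdef]
    rw [fderiv_fun_add (hud x hx) ((hwd x).const_mul ε), fderiv_const_mul (hwd x) ε]
    simp only [ContinuousLinearMap.add_apply, ContinuousLinearMap.smul_apply, smul_eq_mul]
    rfl
  have hpdpdv : ∀ x ∈ Ω, ∀ i j,
      pd (pd v i) j x = pd (pd u i) j x + ε * pd (pd (wb y α r) i) j x := by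
    intro x hx i j
    have heq : pd v i =ᶠ[nhds x] fun z => pd u i z + ε * pd (wb y α r) i z :=
      Filter.eventually_of_mem (hΩo.mem_nhds hx) (fun z hz => hpdv z hz i)
    have h1 : pd (pd v i) j x = fderiv ℝ (pd v i) x (EuclideanSpace.single j 1) := rfl
    rw [h1, heq.fderiv_eq]
    have hdw' : DifferentiableAt ℝ (pd (wb y α r) i) x :=
      (hasFDerivAt_pd_wb y α r x i).differentiableAt
    rw [fderiv_fun_add (hpdud x hx i) (hdw'.const_mul ε), fderiv_const_mul hdw' ε]
    simp only [ContinuousLinearMap.add_apply, ContinuousLinearMap.smul_apply, smul_eq_mul]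
    rfl
  -- the key differential inequality on the annulus
  have hLv : ∀ x ∈ U, 0 < (∑ i, ∑ j, a x i j * pd (pd v i) j x)
      + (∑ i, b x i * pd v i x) + (min (c x) 0) * v x := by
    intro x hxU
    have hx : x ∈ Ω := hUΩ hxU
    have hxd := (hUmem x).1 hxU
    have hxcb : x ∈ closedBall y r := mem_closedBall.2 (le_of_lt hxd.2)
    set e : ℝ := Real.exp (-α * qq y x) with hedef
    have he0 : 0 < e := Real.exp_pos _
    have hqx : qq y x = (dist x y)^2 := by rw [← norm_sq_eq_qq, dist_eq_norm]
    have hdnn : (0:ℝ) ≤ dist x y := dist_nonneg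
    have hq_lb : r^2/4 ≤ qq y x := by rw [hqx]; nlinarith [hxd.1]
    have hq_ub : qq y x ≤ r^2 := by rw [hqx]; nlinarith [hxd.2]
    have hs1 : ∑ i, ∑ j, a x i j * pd (pd v i) j x
        = (∑ i, ∑ j, a x i j * pd (pd u i) j x)
          + ε * (∑ i, ∑ j, a x i j * pd (pd (wb y α r) i) j x) := by
      rw [Finset.mul_sum, ← Finset.sum_add_distrib]
      refine Finset.sum_congr rfl fun i _ => ?_
      rw [Finset.mul_sum, ← Finset.sum_add_distrib]
      refine Finset.sum_congr rfl fun j _ => ?_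
      rw [hpdpdv x hx i j]; ring
    have hs2 : ∑ i, b x i * pd v i x
        = (∑ i, b x i * pd u i x) + ε * (∑ i, b x i * pd (wb y α r) i x) := by
      rw [Finset.mul_sum, ← Finset.sum_add_distrib]
      refine Finset.sum_congr rfl fun i _ => ?_
      rw [hpdv x hx i]; ring
    have hs3 : min (c x) 0 * v x = min (c x) 0 * u x + ε * (min (c x) 0 * wb y α r x) := by
      simp only [hvdef]; ring
    have hF1 : 0 ≤ (∑ i, ∑ j, a x i j * pd (pd u i) j x)
        + (∑ i, b x i * pd u i x) + min (c x) 0 * u x := by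
      have h1 := hLu x hx
      have h2 : 0 ≤ (min (c x) 0 - c x) * u x := by
        nlinarith [min_le_left (c x) 0, hneg x hx]
      have h3 : (∑ i, ∑ j, a x i j * pd (pd u i) j x)
          + (∑ i, b x i * pd u i x) + min (c x) 0 * u x
          = ((∑ i, ∑ j, a x i j * pd (pd u i) j x)
          + (∑ i, b x i * pd u i x) + c x * u x) + (min (c x) 0 - c x) * u x := by ring
      linarith [h1, h2, h3.ge, h3.le]
    -- the a-term for w
    have hA1 : ∑ i, ∑ j, a x i j * pd (pd (wb y α r) i) j x
        = e * (4*α^2) * (∑ i, ∑ j, a x i j * ((x - y) i) * ((x - y) j))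
          - e*(2*α) * (∑ i, a x i i) := by
      have hinner : ∀ i, ∑ j, a x i j * pd (pd (wb y α r) i) j x
          = (∑ j, e * (4*α^2) * (a x i j * ((x - y) i) * ((x - y) j)))
            - e*(2*α) * a x i i := by
        intro i
        have hterm : ∀ j, a x i j * pd (pd (wb y α r) i) j x
            = e * (4*α^2) * (a x i j * ((x - y) i) * ((x - y) j))
              - (if i = j then e*(2*α) * a x i j else 0) := by
          intro j
          rw [pd_pd_wb]
          have h1 : ((x : E n) - y) i = x i - y i := rfl
          have h2 : ((x : E n) - y) j = x j - y j := rfl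
          rw [h1, h2, ← hedef]
          split_ifs with h
          · ring
          · ring
        rw [Finset.sum_congr rfl fun j _ => hterm j, Finset.sum_sub_distrib,
          Finset.sum_ite_eq Finset.univ i (fun j => e*(2*α) * a x i j)]
        simp
      rw [Finset.sum_congr rfl fun i _ => hinner i, Finset.sum_sub_distrib]
      congr 1
      · rw [Finset.mul_sum]
        exact Finset.sum_congr rfl fun i _ => by rw [Finset.mul_sum]
      · rw [Finset.mul_sum]
    have hell1 : lam * qq y x ≤ ∑ i, ∑ j, a x i j * ((x - y) i) * ((x - y) j) := by
      have h := helli x hx (x - y)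
      rwa [norm_sq_eq_qq] at h
    have htr := hK x hxcb
    have hAbound : e * (lam * r^2 * α^2) - e*(2*α)*K
        ≤ ∑ i, ∑ j, a x i j * pd (pd (wb y α r) i) j x := by
      rw [hA1]
      have t1 : 0 ≤ e * (4*α^2) * ((∑ i, ∑ j, a x i j * ((x - y) i) * ((x - y) j)) - lam * qq y x) :=
        mul_nonneg (by positivity) (by linarith)
      have t2 : 0 ≤ e*(2*α) * (K - ∑ i, a x i i) :=
        mul_nonneg (by positivity) (by linarith [(abs_le.1 htr).2])
      have t4 : 0 ≤ e * (4*α^2) * lam * (qq y x - r^2/4) :=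
        mul_nonneg (by positivity) (by linarith)
      nlinarith [t1, t2, t4]
    -- the b-term for w
    have hBbound : -(e * (2*α*M*n*r)) ≤ ∑ i, b x i * pd (wb y α r) i x := by
      have hterm : ∀ i : Fin n, -(M * (2*α*r*e)) ≤ b x i * pd (wb y α r) i x := by
        intro i
        rw [pd_wb, ← hedef]
        have hco : |x i - y i| ≤ r := by
          have h := coord_abs_le y x i
          rw [← dist_eq_norm] at h
          linarith [hxd.2]
        have hb := hM x hx i
        have habs : |b x i * ((-2*α) * (x i - y i) * e)| ≤ M * (2*α*r*e) := by
          rw [abs_mul, abs_mul, abs_mul, abs_of_pos he0]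
          have h2α : |(-2*α)| = 2*α := by rw [abs_of_nonpos (by linarith)]; ring
          rw [h2α]
          have hb0 : (0:ℝ) ≤ |b x i| := abs_nonneg _
          have hc0 : (0:ℝ) ≤ |x i - y i| := abs_nonneg _
          calc |b x i| * (2*α * |x i - y i| * e) ≤ M * (2*α * |x i - y i| * e) := by
                apply mul_le_mul_of_nonneg_right hb
                positivity
            _ ≤ M * (2*α * r * e) := by
                apply mul_le_mul_of_nonneg_left _ hM0
                have := mul_le_mul_of_nonneg_right hco (le_of_lt he0)
                nlinarith
            _ = M * (2*α*r*e) := by ring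
        linarith [neg_abs_le (b x i * ((-2*α) * (x i - y i) * e))]
      have hsum := Finset.sum_le_sum fun i (_ : i ∈ Finset.univ) => hterm i
      rw [Finset.sum_const, Finset.card_univ, Fintype.card_fin] at hsum
      have : (n:ℝ) • (-(M * (2*α*r*e))) = -(e * (2*α*M*n*r)) := by
        rw [smul_eq_mul]; ring
      rw [nsmul_eq_mul] at hsum
      calc -(e * (2*α*M*n*r)) = (n:ℝ) * (-(M * (2*α*r*e))) := by ring
        _ ≤ ∑ i, b x i * pd (wb y α r) i x := hsum
    -- the c-term for w
    have hw0 : 0 ≤ wb y α r x := by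
      have : Real.exp (-α * r^2) ≤ Real.exp (-α * qq y x) :=
        Real.exp_le_exp.2 (by nlinarith)
      simp only [wb]
      linarith
    have hwe : wb y α r x ≤ e := by
      have := Real.exp_pos (-α * r^2)
      simp only [wb, ← hedef]
      linarith
    have hctb : -(Mc * e) ≤ min (c x) 0 * wb y α r x := by
      have h1 : -Mc ≤ min (c x) 0 :=
        le_min ((abs_le.1 (hMc x hx)).1) (by linarith)
      have h2 : (-Mc) * wb y α r x ≤ min (c x) 0 * wb y α r x :=
        mul_le_mul_of_nonneg_right h1 hw0
      have h3 : (-Mc) * e ≤ (-Mc) * wb y α r x :=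
        mul_le_mul_of_nonpos_left hwe (by linarith : -Mc ≤ 0)
      linarith
    have hF2 : 0 < (∑ i, ∑ j, a x i j * pd (pd (wb y α r) i) j x)
        + (∑ i, b x i * pd (wb y α r) i x) + min (c x) 0 * wb y α r x := by
      have hprod : 0 < e * (lam*r^2*α^2 - (2*K*α + 2*M*n*r*α + Mc)) :=
        mul_pos he0 (by linarith)
      nlinarith [hAbound, hBbound, hctb]
    rw [hs1, hs2, hs3]
    have hεF2 := mul_pos hε hF2
    have hdist : ε * (∑ i, ∑ j, a x i j * pd (pd (wb y α r) i) j x)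
        + ε * (∑ i, b x i * pd (wb y α r) i x) + ε * (min (c x) 0 * wb y α r x)
        = ε * ((∑ i, ∑ j, a x i j * pd (pd (wb y α r) i) j x)
        + (∑ i, b x i * pd (wb y α r) i x) + min (c x) 0 * wb y α r x) := by ring
    linarith [hF1, hεF2, hdist.ge, hdist.le]
  -- boundary values
  have hqnn : ∀ x : E n, 0 ≤ qq y x := fun x => Finset.sum_nonneg fun k _ => sq_nonneg _
  have hfront : ∀ x ∈ frontier U, v x ≤ 0 := by
    intro x hxf
    obtain ⟨hxcl, hxni⟩ := hxf
    have hxnU : x ∉ U := fun h => hxni (by rw [hUo.interior_eq]; exact h)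
    have hd := hclosU x hxcl
    have hcase : dist x y = r ∨ dist x y = r/2 := by
      rcases eq_or_lt_of_le hd.1 with h | h
      · left; exact h
      rcases eq_or_lt_of_le hd.2 with h2 | h2
      · right; exact h2.symm
      · exact absurd ((hUmem x).2 ⟨h2, h⟩) hxnU
    rcases hcase with h | h
    · have hq : qq y x = r^2 := by rw [← norm_sq_eq_qq, ← dist_eq_norm, h]
      have hw : wb y α r x = 0 := by simp [wb, hq]
      have hxΩ : x ∈ Ω := hball (mem_closedBall.2 hd.1)
      simp only [hvdef, hw, mul_zero, add_zero]
      exact hneg x hxΩ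
    · have hus := husph x h
      have hwlt : wb y α r x ≤ 1 := by
        have h1 : Real.exp (-α * qq y x) ≤ 1 := by
          rw [Real.exp_le_one_iff]
          nlinarith [hqnn x]
        have h2 := Real.exp_pos (-α * r^2)
        simp only [wb]; linarith
      simp only [hvdef]
      nlinarith [hε]
  -- apply the weak maximum principle
  have hAell : ∀ x ∈ U, ∀ ξ : E n, 0 ≤ ∑ i, ∑ j, a x i j * ξ i * ξ j := fun x hx ξ => by
    have h := helli x (hUΩ hx) ξ
    nlinarith [norm_nonneg ξ, sq_nonneg ‖ξ‖]
  have hvle : ∀ x ∈ closure U, v x ≤ 0 :=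
    weakmax hUo hUb hΩo hUΩ hv2 hvc a b (fun x => min (c x) 0) hAell
      (fun x _ i j => hasym x i j) (fun x _ => min_le_right _ _) hLv hfront
  -- the contradiction at x0
  have hx0cb : x0 ∈ closedBall y r := mem_closedBall.2 hx0.le
  have hx0Ω : x0 ∈ Ω := hball hx0cb
  have hqx0 : qq y x0 = r^2 := by rw [← norm_sq_eq_qq, ← dist_eq_norm, hx0]
  have hwx0 : wb y α r x0 = 0 := by simp [wb, hqx0]
  have hvx0 : v x0 = 0 := by simp [hvdef, hwx0, hu0]
  have hfu0 : fderiv ℝ u x0 = 0 := by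
    have hlm : IsLocalMax u x0 := by
      filter_upwards [hΩo.mem_nhds hx0Ω] with z hz
      exact (hneg z hz).trans_eq hu0.symm
    exact hlm.fderiv_eq_zero
  set d : E n := y - x0 with hddef
  have hQd : Qd y x0 d = -(2*r^2) := by
    rw [Qd_apply]
    have hterm : ∀ k : Fin n, 2*(x0 k - y k) * d k = -(2 * (x0 k - y k)^2) := by
      intro k
      have hdk : d k = y k - x0 k := rfl
      rw [hdk]; ring
    rw [Finset.sum_congr rfl fun k _ => hterm k]
    have h2 : (2:ℝ) * qq y x0 = ∑ k, 2 * (x0 k - y k)^2 := by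
      simp only [qq]; rw [Finset.mul_sum]
    have h3 : ∑ k, -((2:ℝ) * (x0 k - y k)^2) = -(2 * qq y x0) := by
      rw [h2, ← Finset.sum_neg_distrib]
    rw [h3, hqx0]
  have hwd0 : fderiv ℝ (wb y α r) x0 d = 2*α*r^2 * Real.exp (-α * r^2) := by
    rw [(hasFDerivAt_wb y α r x0).fderiv]
    simp only [ContinuousLinearMap.smul_apply, smul_eq_mul]
    rw [hQd, hqx0]; ring
  have hline : HasDerivAt (fun t : ℝ => x0 + t • d) d 0 := by
    have h1 : HasDerivAt (fun t : ℝ => t • d) ((1:ℝ) • d) 0 := (hasDerivAt_id 0).smul_const d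
    rw [one_smul] at h1
    exact h1.const_add x0
  have hvdiff : HasFDerivAt v (fderiv ℝ v x0) (x0 + (0:ℝ) • d) := by
    rw [show x0 + (0:ℝ) • d = x0 by simp]
    exact ((hv2.differentiableOn (by norm_num)).differentiableAt
      (hΩo.mem_nhds hx0Ω)).hasFDerivAt
  have hsplit : fderiv ℝ v x0 d = ε * (2*α*r^2 * Real.exp (-α * r^2)) := by
    have h1 : fderiv ℝ v x0 = fderiv ℝ u x0 + ε • fderiv ℝ (wb y α r) x0 := by
      rw [hvdef, fderiv_fun_add (hud x0 hx0Ω) ((hwd x0).const_mul ε),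
        fderiv_const_mul (hwd x0) ε]
    rw [h1]
    simp only [ContinuousLinearMap.add_apply, ContinuousLinearMap.smul_apply, smul_eq_mul,
      hfu0, hwd0]
    simp
  have hvd : HasDerivAt (fun t : ℝ => v (x0 + t • d)) (ε * (2*α*r^2 * Real.exp (-α * r^2))) 0 := by
    have h := hvdiff.comp_hasDerivAt 0 hline
    rwa [hsplit] at h
  have hslope : ∀ t ∈ Ioo (0:ℝ) (1/2), v (x0 + t • d) ≤ 0 := by
    intro t ht
    apply hvle _ (subset_closure _)
    rw [hUmem]
    have hd1 : x0 + t • d - y = (1 - t) • (x0 - y) := by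
      rw [hddef]; module
    have hdist : dist (x0 + t • d) y = (1 - t) * r := by
      have hnxy : ‖x0 - y‖ = r := by rw [← dist_eq_norm, hx0]
      rw [dist_eq_norm, hd1, norm_smul, hnxy, Real.norm_eq_abs,
        abs_of_pos (by linarith [ht.2] : (0:ℝ) < 1 - t)]
    rw [hdist]
    constructor
    · nlinarith [ht.1, ht.2]
    · nlinarith [ht.1, ht.2]
  have hle0 : ε * (2*α*r^2 * Real.exp (-α * r^2)) ≤ 0 := by
    have hW := hvd.hasDerivWithinAt (s := Ioi (0:ℝ))
    rw [hasDerivWithinAt_iff_tendsto_slope] at hW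
    have hIoi : (Ioi (0:ℝ)) \ {0} = Ioi 0 :=
      Set.diff_singleton_eq_self (fun h => lt_irrefl (0:ℝ) h)
    rw [hIoi] at hW
    refine le_of_tendsto hW ?_
    filter_upwards [Ioo_mem_nhdsGT_of_mem (by norm_num : (0:ℝ) ∈ Ico (0:ℝ) (1/2))] with t ht
    rw [slope_def_field]
    have h1 := hslope t ht
    have h2 : v (x0 + (0:ℝ) • d) = 0 := by
      rw [show x0 + (0:ℝ) • d = x0 by simp]
      exact hvx0
    rw [h2, sub_zero, sub_zero]
    rw [div_nonpos_iff]
    right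
    exact ⟨h1, le_of_lt ht.1⟩
  have hpos : 0 < ε * (2*α*r^2 * Real.exp (-α * r^2)) :=
    mul_pos hε (mul_pos (by nlinarith [hα0, hr] : (0:ℝ) < 2*α*r^2) (Real.exp_pos _))
  linarith [hle0, hpos]


/-- **Serrin's comparison principle.** Let `Ω ⊂ ℝ^n` be a bounded domain and
`Lu = Σ a_{ij} ∂²u/∂x_i∂x_j + Σ b_i ∂u/∂x_i + c u` a uniformly elliptic operator with
`a_{ij} = a_{ji}` continuous on `closure Ω` and `b_i, c ∈ L^∞(Ω)`.  If
`u ∈ C²(Ω) ∩ C(closure Ω)` satisfies `Lu ≥ 0` and `u ≤ 0` in `Ω`, then either `u < 0`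
everywhere in `Ω` or `u ≡ 0` in `Ω`. -/
theorem statement16 (n : ℕ)
    (Ω : Set (EuclideanSpace ℝ (Fin n)))
    (hΩo : IsOpen Ω) (hΩc : IsConnected Ω) (hΩb : Bornology.IsBounded Ω)
    (a : EuclideanSpace ℝ (Fin n) → Fin n → Fin n → ℝ)
    (b : EuclideanSpace ℝ (Fin n) → Fin n → ℝ)
    (c : EuclideanSpace ℝ (Fin n) → ℝ)
    (hasym : ∀ x i j, a x i j = a x j i)
    (hacont : ∀ i j, ContinuousOn (fun x => a x i j) (closure Ω))
    (hbbd : ∃ M : ℝ, ∀ x ∈ Ω, ∀ i, |b x i| ≤ M)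
    (hcbd : ∃ M : ℝ, ∀ x ∈ Ω, |c x| ≤ M)
    (hell : ∃ lam > (0 : ℝ), ∀ x ∈ Ω, ∀ ξ : EuclideanSpace ℝ (Fin n),
        lam * ‖ξ‖ ^ 2 ≤ ∑ i, ∑ j, a x i j * ξ i * ξ j)
    (u : EuclideanSpace ℝ (Fin n) → ℝ)
    (hu2 : ContDiffOn ℝ 2 u Ω) (huc : ContinuousOn u (closure Ω))
    (hLu : ∀ x ∈ Ω,
        0 ≤ (∑ i, ∑ j, a x i j * pd (pd u i) j x) + (∑ i, b x i * pd u i x) + c x * u x)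
    (hneg : ∀ x ∈ Ω, u x ≤ 0) :
    (∀ x ∈ Ω, u x < 0) ∨ (∀ x ∈ Ω, u x = 0) := by
  by_cases hn : n = 0
  · subst hn
    by_cases h : ∀ x ∈ Ω, u x < 0
    · exact Or.inl h
    · push_neg at h
      obtain ⟨x1, hx1, hx1'⟩ := h
      refine Or.inr fun x hx => ?_
      have hxx : x = x1 := Subsingleton.elim x x1
      rw [hxx]
      exact le_antisymm (hneg x1 hx1) hx1'
  · have hn' : 0 < n := Nat.pos_of_ne_zero hn
    set N : Set (E n) := Ω ∩ u ⁻¹' (Iio 0) with hNdef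
    set Z : Set (E n) := Ω ∩ u ⁻¹' {0} with hZdef
    have huΩ : ContinuousOn u Ω := huc.mono subset_closure
    have hNo : IsOpen N := huΩ.isOpen_inter_preimage hΩo isOpen_Iio
    have hcover : Ω ⊆ N ∪ Z := fun x hx => by
      rcases lt_or_eq_of_le (hneg x hx) with h | h
      · exact Or.inl ⟨hx, h⟩
      · exact Or.inr ⟨hx, h⟩
    have hdisj : Disjoint N Z := by
      rw [Set.disjoint_left]
      rintro x ⟨_, hx1⟩ ⟨_, hx2⟩
      simp only [mem_preimage, mem_Iio] at hx1
      simp only [mem_preimage, mem_singleton_iff] at hx2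
      rw [hx2] at hx1
      exact lt_irrefl 0 hx1
    have hΩc_ne : (Ωᶜ : Set (E n)).Nonempty := by
      obtain ⟨R, hR⟩ := hΩb.subset_closedBall (0 : E n)
      refine ⟨(|R|+1) • EuclideanSpace.single ⟨0, hn'⟩ (1:ℝ), fun hmem => ?_⟩
      have := hR hmem
      rw [mem_closedBall, dist_zero_right, norm_smul, EuclideanSpace.norm_single] at this
      simp only [norm_one, mul_one, Real.norm_eq_abs, abs_abs] at this
      rw [abs_of_nonneg (by positivity : (0:ℝ) ≤ |R| + 1)] at this
      have := le_abs_self R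
      linarith [le_abs_self R, this]
    have hZo : IsOpen Z := by
      rw [Metric.isOpen_iff]
      intro z hz
      set ρ := infDist z (Ωᶜ : Set (E n)) with hρdef
      have hρ0 : 0 < ρ :=
        (IsClosed.notMem_iff_infDist_pos (isClosed_compl_iff.2 hΩo) hΩc_ne).1
          (by simp [hz.1])
      have hballρ : ball z ρ ⊆ Ω := by
        intro p hp
        by_contra hpΩ
        have h1 : infDist z (Ωᶜ : Set (E n)) ≤ dist z p :=
          infDist_le_dist_of_mem hpΩ
        rw [mem_ball, dist_comm] at hp
        rw [← hρdef] at h1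
        linarith
      refine ⟨ρ/8, by linarith, ?_⟩
      intro x1 hx1b
      have hx1Ω : x1 ∈ Ω := hballρ (by
        rw [mem_ball] at hx1b ⊢
        linarith [hx1b])
      by_contra hx1Z
      have hux1 : u x1 < 0 := by
        rcases lt_or_eq_of_le (hneg x1 hx1Ω) with h | h
        · exact h
        · exact absurd (⟨hx1Ω, h⟩ : x1 ∈ Z) hx1Z
      set r := infDist x1 Z with hrdef
      have hzZ : z ∈ Z := hz
      have hrle : r ≤ dist x1 z := infDist_le_dist_of_mem hzZ
      have hx1b' : dist x1 z < ρ/8 := mem_ball.1 hx1b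
      have hrlt : r < ρ/8 := lt_of_le_of_lt hrle hx1b'
      have hr0 : 0 < r := by
        obtain ⟨s, hs0, hsN⟩ := Metric.isOpen_iff.1 hNo x1 ⟨hx1Ω, hux1⟩
        have hle : s ≤ r := by
          by_contra hlt
          push_neg at hlt
          rw [hrdef] at hlt
          obtain ⟨q, hqZ, hq⟩ := (infDist_lt_iff ⟨z, hzZ⟩).1 hlt
          have hqN : q ∈ N := hsN (by rw [mem_ball, dist_comm]; exact hq)
          exact (Set.disjoint_left.1 hdisj hqN) hqZ
        linarith
      have hcb2 : closedBall x1 (2*r) ⊆ Ω := by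
        intro p hp
        apply hballρ
        rw [mem_ball]
        have h1 : dist p z ≤ dist p x1 + dist x1 z := dist_triangle p x1 z
        have h2 : dist p x1 ≤ 2*r := mem_closedBall.1 hp
        linarith
      have hultb : ∀ x ∈ ball x1 r, u x < 0 := by
        intro x hxb
        have hxΩ : x ∈ Ω := hcb2 (mem_closedBall.2 (by
          have := mem_ball.1 hxb; linarith))
        rcases lt_or_eq_of_le (hneg x hxΩ) with h | h
        · exact h
        · exfalso
          have h1 : infDist x1 Z ≤ dist x1 x := infDist_le_dist_of_mem ⟨hxΩ, h⟩
          rw [← hrdef, dist_comm] at h1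
          exact absurd (mem_ball.1 hxb) (not_lt.2 h1)
      set S : Set (E n) := closedBall x1 (2*r) ∩ u ⁻¹' {0} with hSdef
      have hScl : IsClosed S :=
        ContinuousOn.preimage_isClosed_of_isClosed (huΩ.mono hcb2)
          Metric.isClosed_closedBall isClosed_singleton
      have hScp : IsCompact S :=
        (isCompact_closedBall x1 (2*r)).of_isClosed_subset hScl inter_subset_left
      have hSZ : S ⊆ Z := fun p hp => ⟨hcb2 hp.1, hp.2⟩
      have hSne : S.Nonempty := by
        have h2 : infDist x1 Z < 2*r := by rw [← hrdef]; linarith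
        obtain ⟨q, hqZ, hq⟩ := (infDist_lt_iff ⟨z, hzZ⟩).1 h2
        exact ⟨q, ⟨mem_closedBall.2 (by rw [dist_comm]; linarith), hqZ.2⟩⟩
      obtain ⟨x0, hx0S, hx0d⟩ := hScp.exists_infDist_eq_dist hSne x1
      have hx0Z : x0 ∈ Z := hSZ hx0S
      have hd_ge : r ≤ dist x1 x0 := by
        rw [hrdef]; exact infDist_le_dist_of_mem hx0Z
      have hd_le : dist x1 x0 ≤ r := by
        rw [← hx0d]
        by_contra hgt
        push_neg at hgt
        have hrm : r < min (infDist x1 S) (2*r) := lt_min hgt (by linarith)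
        have h3 : infDist x1 Z < min (infDist x1 S) (2*r) := by rw [← hrdef]; exact hrm
        obtain ⟨q, hqZ, hq⟩ := (infDist_lt_iff ⟨z, hzZ⟩).1 h3
        have hqS : q ∈ S := ⟨mem_closedBall.2 (by
          rw [dist_comm]
          linarith [min_le_right (infDist x1 S) (2*r)]), hqZ.2⟩
        have h4 : infDist x1 S ≤ dist x1 q := infDist_le_dist_of_mem hqS
        linarith [min_le_left (infDist x1 S) (2*r)]
      have hdeq : dist x0 x1 = r := by
        rw [dist_comm]; exact le_antisymm hd_le hd_ge
      exact hopf hΩo a b c hacont hbbd hcbd hell hasym u hu2 huc hLu hneg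
        hr0 hn' (fun p hp => hcb2 (closedBall_subset_closedBall (by linarith) hp))
        hultb hdeq hx0Z.2
    rcases IsPreconnected.subset_or_subset hNo hZo hdisj hcover hΩc.isPreconnected with h | h
    · exact Or.inl fun x hx => (h hx).2
    · exact Or.inr fun x hx => (h hx).2
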